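/- Let m ≥ 3 be an integer, let a < b and R > 0, and let v : ℝ² → ℝ be continuously differentiable on (a, b) × (0, ∞) with v(ξ₁, t) → 0 as t → +∞ for each ξ₁ ∈ (a, b). Then ∫_{(a,b)×(R,∞)} v(ξ)² dξ ≤ (2m−3)^{−1} (2m−4)^{−1} R^{−2(m−2)} ∫_{(a,b)×(R,∞)} ξ₂^{2m−2} (∂v/∂ξ₂(ξ))² dξ. (This is the integrated decay estimate established in the proof of Lemma 5.4, bounding the L₂ norm of a decaying function on the part of the half-strip above height R by a negative power of R times a weighted L₂ norm of its vertical derivative.) -/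

import Mathlib

open MeasureTheory Set Filter
open scoped ENNReal

/-- One-dimensional core estimate. -/
lemma oneDim_decay (p : ℝ) (hp : 4 ≤ p) (R : ℝ) (hR : 0 < R) (g : ℝ → ℝ)
    (hg : ∀ t ∈ Set.Ioi R, HasDerivAt g (deriv g t) t)
    (hlim : Filter.Tendsto g Filter.atTop (nhds 0)) :
    ∫⁻ s in Set.Ioi R, ENNReal.ofReal (g s ^ 2)
      ≤ ENNReal.ofReal ((p - 1)⁻¹ * (p - 2)⁻¹ * R ^ (-(p - 2))) *
        ∫⁻ t in Set.Ioi R, ENNReal.ofReal (t ^ p * (deriv g t) ^ 2) := by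
  set J := ∫⁻ t in Set.Ioi R, ENNReal.ofReal (t ^ p * (deriv g t) ^ 2) with hJdef
  by_cases hJ : J = ⊤
  · rw [hJ, ENNReal.mul_top]
    · exact le_top
    · rw [Ne, ENNReal.ofReal_eq_zero, not_le]
      have h0 : (0:ℝ) < R ^ (-(p-2)) := Real.rpow_pos_of_pos hR _
      have h1 : (0:ℝ) < (p-1)⁻¹ := inv_pos.2 (by linarith)
      have h2 : (0:ℝ) < (p-2)⁻¹ := inv_pos.2 (by linarith)
      positivity
  have hdm : Measurable (deriv g) := measurable_deriv g
  -- Hölder bound on the tail integral of |deriv g|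
  have key : ∀ s ∈ Set.Ioi R,
      (∫⁻ t in Set.Ioi s, ENNReal.ofReal |deriv g t|) ^ (2:ℕ)
        ≤ ENNReal.ofReal (s ^ (1 - p) / (p - 1)) * J := by
    intro s hs
    have hs0 : (0:ℝ) < s := hR.trans hs
    set f1 : ℝ → ℝ≥0∞ := fun t => ENNReal.ofReal (t ^ (-(p/2))) with hf1def
    set f2 : ℝ → ℝ≥0∞ := fun t => ENNReal.ofReal (t ^ (p/2) * |deriv g t|) with hf2def
    have hf1 : Measurable f1 := by
      have : Measurable fun t : ℝ => t ^ (-(p/2)) := by fun_prop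
      exact this.ennreal_ofReal
    have hf2 : Measurable f2 := by
      have : Measurable fun t : ℝ => t ^ (p/2) := by fun_prop
      exact (this.mul hdm.abs).ennreal_ofReal
    have sq_ofReal : ∀ a : ℝ, 0 ≤ a → ENNReal.ofReal a ^ (2:ℝ) = ENNReal.ofReal (a ^ (2:ℕ)) := by
      intro a ha
      rw [show (2:ℝ) = ((2:ℕ):ℝ) by norm_num, ENNReal.rpow_natCast, ← ENNReal.ofReal_pow ha]
    have hsq : ∀ t : ℝ, 0 ≤ t → ∀ q : ℝ, (t ^ q) ^ (2:ℕ) = t ^ (q * 2) := by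
      intro t ht q
      rw [← Real.rpow_natCast (t ^ q) 2, ← Real.rpow_mul ht]
      norm_num
    have hconj : (2:ℝ).HolderConjugate 2 := Real.HolderConjugate.two_two
    have hold := ENNReal.lintegral_mul_le_Lp_mul_Lq (volume.restrict (Set.Ioi s)) hconj
      hf1.aemeasurable hf2.aemeasurable
    have heq0 : ∫⁻ t in Set.Ioi s, ENNReal.ofReal |deriv g t|
        = ∫⁻ t in Set.Ioi s, (f1 * f2) t := by
      refine setLIntegral_congr_fun measurableSet_Ioi (fun t ht => ?_)
      have ht0 : (0:ℝ) < t := hs0.trans ht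
      simp only [Pi.mul_apply, hf1def, hf2def]
      rw [← ENNReal.ofReal_mul (Real.rpow_nonneg ht0.le _), ← mul_assoc,
        ← Real.rpow_add ht0]
      norm_num
    have hA : ∫⁻ t in Set.Ioi s, f1 t ^ (2:ℝ)
        = ENNReal.ofReal (s ^ (1 - p) / (p - 1)) := by
      have h1 : ∫⁻ t in Set.Ioi s, f1 t ^ (2:ℝ)
          = ∫⁻ t in Set.Ioi s, ENNReal.ofReal (t ^ (-p)) := by
        refine setLIntegral_congr_fun measurableSet_Ioi (fun t ht => ?_)
        have ht0 : (0:ℝ) < t := hs0.trans ht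
        show ENNReal.ofReal (t ^ (-(p/2))) ^ (2:ℝ) = _
        rw [sq_ofReal _ (Real.rpow_nonneg ht0.le _), hsq t ht0.le,
          show -(p/2) * 2 = -p by ring]
      have hnn : 0 ≤ᵐ[volume.restrict (Set.Ioi s)] fun t : ℝ => t ^ (-p) :=
        (ae_restrict_mem measurableSet_Ioi).mono fun t ht =>
          Real.rpow_nonneg (hs0.trans ht).le _
      rw [h1, ← ofReal_integral_eq_lintegral_ofReal
        (integrableOn_Ioi_rpow_of_lt (by linarith) hs0) hnn,
        integral_Ioi_rpow_of_lt (by linarith) hs0]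
      congr 1
      have hz : (1:ℝ) - p ≠ 0 := by linarith
      have hz' : p - 1 ≠ 0 := by linarith
      rw [show -p + 1 = 1 - p by ring]
      field_simp
      ring
    have hB : ∫⁻ t in Set.Ioi s, f2 t ^ (2:ℝ) ≤ J := by
      have h1 : ∫⁻ t in Set.Ioi s, f2 t ^ (2:ℝ)
          = ∫⁻ t in Set.Ioi s, ENNReal.ofReal (t ^ p * (deriv g t) ^ 2) := by
        refine setLIntegral_congr_fun measurableSet_Ioi (fun t ht => ?_)
        have ht0 : (0:ℝ) < t := hs0.trans ht
        show ENNReal.ofReal (t ^ (p/2) * |deriv g t|) ^ (2:ℝ) = _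
        rw [sq_ofReal _ (mul_nonneg (Real.rpow_nonneg ht0.le _) (abs_nonneg _)),
          mul_pow, hsq t ht0.le, show p/2 * 2 = p by ring, sq_abs]
      rw [h1, hJdef]
      exact lintegral_mono_set (Set.Ioi_subset_Ioi hs.le)
    calc (∫⁻ t in Set.Ioi s, ENNReal.ofReal |deriv g t|) ^ (2:ℕ)
        ≤ ((∫⁻ t in Set.Ioi s, f1 t ^ (2:ℝ)) ^ (1/2:ℝ)
            * (∫⁻ t in Set.Ioi s, f2 t ^ (2:ℝ)) ^ (1/2:ℝ)) ^ (2:ℕ) := by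
          rw [heq0]; exact pow_le_pow_left' hold 2
      _ = (∫⁻ t in Set.Ioi s, f1 t ^ (2:ℝ)) * (∫⁻ t in Set.Ioi s, f2 t ^ (2:ℝ)) := by
          rw [mul_pow, ← ENNReal.rpow_natCast ((∫⁻ t in Set.Ioi s, f1 t ^ (2:ℝ)) ^ (1/2:ℝ)) 2,
            ← ENNReal.rpow_natCast ((∫⁻ t in Set.Ioi s, f2 t ^ (2:ℝ)) ^ (1/2:ℝ)) 2,
            ← ENNReal.rpow_mul, ← ENNReal.rpow_mul]
          norm_num
      _ ≤ ENNReal.ofReal (s ^ (1 - p) / (p - 1)) * J := by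
          rw [hA]; exact mul_le_mul_right hB _
  -- integrability of deriv g on tails
  have hint : ∀ s ∈ Set.Ioi R, IntegrableOn (deriv g) (Set.Ioi s) := by
    intro s hs
    have hlt : (∫⁻ t in Set.Ioi s, ENNReal.ofReal |deriv g t|) ^ (2:ℕ) < ⊤ :=
      (key s hs).trans_lt (ENNReal.mul_lt_top ENNReal.ofReal_lt_top (lt_top_iff_ne_top.2 hJ))
    have hfin : (∫⁻ t in Set.Ioi s, ENNReal.ofReal |deriv g t|) ≠ ⊤ := by
      intro h
      rw [h] at hlt
      simp [ENNReal.top_pow] at hlt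
    refine ⟨hdm.aestronglyMeasurable.restrict, ?_⟩
    rw [hasFiniteIntegral_iff_norm]
    simpa [Real.norm_eq_abs] using lt_top_iff_ne_top.2 hfin
  -- representation of g as tail integral of its derivative
  have hrep : ∀ s ∈ Set.Ioi R, g s = -∫ t in Set.Ioi s, deriv g t := by
    intro s hs
    have h1 : Tendsto (fun T => ∫ t in s..T, deriv g t) atTop
        (nhds (∫ t in Set.Ioi s, deriv g t)) :=
      intervalIntegral_tendsto_integral_Ioi s (hint s hs) tendsto_id
    have h2 : Tendsto (fun T => g T - g s) atTop (nhds (0 - g s)) :=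
      hlim.sub_const _
    have heq : ∀ᶠ T in atTop, g T - g s = ∫ t in s..T, deriv g t := by
      filter_upwards [eventually_ge_atTop s] with T hT
      have hderivs : ∀ x ∈ Set.uIcc s T, HasDerivAt g (deriv g x) x := by
        intro x hx
        rw [Set.uIcc_of_le hT] at hx
        exact hg x (lt_of_lt_of_le hs hx.1)
      have hii : IntervalIntegrable (deriv g) volume s T := by
        rw [intervalIntegrable_iff_integrableOn_Ioc_of_le hT]
        exact (hint s hs).mono_set Set.Ioc_subset_Ioi_self
      exact (intervalIntegral.integral_eq_sub_of_hasDerivAt hderivs hii).symm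
    have := tendsto_nhds_unique (h2.congr' heq) h1
    linarith [this]
  -- pointwise bound
  have hpt : ∀ s ∈ Set.Ioi R, ENNReal.ofReal (g s ^ 2)
      ≤ ENNReal.ofReal (s ^ (1 - p) / (p - 1)) * J := by
    intro s hs
    have h1 : |g s| ≤ ∫ t in Set.Ioi s, |deriv g t| := by
      rw [hrep s hs, abs_neg]
      simpa [Real.norm_eq_abs] using
        norm_integral_le_integral_norm (μ := volume.restrict (Set.Ioi s)) (deriv g)
    have h2 : ENNReal.ofReal (∫ t in Set.Ioi s, |deriv g t|)
        = ∫⁻ t in Set.Ioi s, ENNReal.ofReal |deriv g t| :=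
      ofReal_integral_eq_lintegral_ofReal (hint s hs).abs (ae_of_all _ fun t => abs_nonneg _)
    calc ENNReal.ofReal (g s ^ 2) = ENNReal.ofReal |g s| ^ (2:ℕ) := by
          rw [← ENNReal.ofReal_pow (abs_nonneg _), sq_abs]
      _ ≤ (∫⁻ t in Set.Ioi s, ENNReal.ofReal |deriv g t|) ^ (2:ℕ) := by
          refine pow_le_pow_left' ?_ 2
          rw [← h2]
          exact ENNReal.ofReal_le_ofReal h1
      _ ≤ _ := key s hs
  -- integrate the pointwise bound
  have hmono : ∫⁻ s in Set.Ioi R, ENNReal.ofReal (g s ^ 2)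
      ≤ ∫⁻ s in Set.Ioi R, ENNReal.ofReal (s ^ (1 - p) / (p - 1)) * J :=
    setLIntegral_mono
      (((by fun_prop : Measurable fun s : ℝ => s ^ (1 - p)).div_const (p - 1)).ennreal_ofReal.mul_const J)
      hpt
  refine hmono.trans (le_of_eq ?_)
  rw [lintegral_mul_const' J _ hJ]
  congr 1
  have hnn : 0 ≤ᵐ[volume.restrict (Set.Ioi R)] fun s : ℝ => s ^ (1 - p) / (p - 1) :=
    (ae_restrict_mem measurableSet_Ioi).mono fun s hsm =>
      div_nonneg (Real.rpow_nonneg (hR.trans hsm).le _) (by linarith)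
  rw [← ofReal_integral_eq_lintegral_ofReal
    ((integrableOn_Ioi_rpow_of_lt (by linarith : 1 - p < -1) hR).div_const (p - 1)) hnn]
  congr 1
  rw [integral_div, integral_Ioi_rpow_of_lt (by linarith : 1 - p < -1) hR,
    show (1:ℝ) - p + 1 = -(p - 2) by ring]
  have hz1 : p - 1 ≠ 0 := by linarith
  have hz2 : p - 2 ≠ 0 := by linarith
  generalize R ^ (-(p - 2)) = A
  rw [neg_div_neg_eq, div_div, div_eq_mul_inv, mul_inv]
  ring

/-- Integrated decay estimate from the proof of Lemma 5.4: for a `C¹` function on the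
half-strip decaying at `+∞`, the `L₂` norm on the part above height `R` is bounded by
`(2m−3)^{−1}(2m−4)^{−1} R^{−2(m−2)}` times a weighted `L₂` norm of the vertical derivative
(the inequality is stated for the lower Lebesgue integral, so it holds trivially if the
right-hand side is infinite). -/
theorem integrated_decay_estimate (m : ℕ) (hm : 3 ≤ m) (a b R : ℝ)
    (hab : a < b) (hR : 0 < R) (v : ℝ × ℝ → ℝ)
    (hv : ContDiffOn ℝ 1 v (Set.Ioo a b ×ˢ Set.Ioi (0 : ℝ)))
    (hlim : ∀ ξ₁ ∈ Set.Ioo a b,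
      Filter.Tendsto (fun t => v (ξ₁, t)) Filter.atTop (nhds 0)) :
    ∫⁻ ξ in Set.Ioo a b ×ˢ Set.Ioi R, ENNReal.ofReal ((v ξ) ^ 2)
      ≤ ENNReal.ofReal
          ((2 * (m : ℝ) - 3)⁻¹ * (2 * (m : ℝ) - 4)⁻¹ * R ^ (-(2 : ℝ) * ((m : ℝ) - 2))) *
        ∫⁻ ξ in Set.Ioo a b ×ˢ Set.Ioi R,
          ENNReal.ofReal (ξ.2 ^ (2 * m - 2) * (deriv (fun t => v (ξ.1, t)) ξ.2) ^ 2) := by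
  have hm' : (3:ℝ) ≤ (m:ℝ) := by exact_mod_cast hm
  set p : ℝ := ((2 * m - 2 : ℕ) : ℝ) with hpdef
  have hpcast : p = 2 * (m:ℝ) - 2 := by
    rw [hpdef]
    push_cast [Nat.cast_sub (by omega : 2 ≤ 2 * m)]
    ring
  have hp4 : (4:ℝ) ≤ p := by rw [hpcast]; linarith
  have hUsub : Set.Ioo a b ×ˢ Set.Ioi R ⊆ Set.Ioo a b ×ˢ Set.Ioi (0:ℝ) :=
    Set.prod_mono_right (Set.Ioi_subset_Ioi hR.le)
  have hUopen : IsOpen (Set.Ioo a b ×ˢ Set.Ioi (0:ℝ)) := isOpen_Ioo.prod isOpen_Ioi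
  have hS : MeasurableSet (Set.Ioo a b ×ˢ Set.Ioi R) :=
    measurableSet_Ioo.prod measurableSet_Ioi
  -- the vertical slices have derivative given by the full derivative of `v`
  have hslice : ∀ x y : ℝ, (x, y) ∈ Set.Ioo a b ×ˢ Set.Ioi (0:ℝ) →
      HasDerivAt (fun t => v (x, t)) (fderiv ℝ v (x, y) ((0:ℝ), (1:ℝ))) y := by
    intro x y hxy
    have hd : DifferentiableAt ℝ v (x, y) :=
      (hv.differentiableOn one_ne_zero).differentiableAt (hUopen.mem_nhds hxy)
    have hcurve : HasDerivAt (fun t : ℝ => ((x, t) : ℝ × ℝ)) ((0:ℝ), (1:ℝ)) y :=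
      (hasDerivAt_const y x).prodMk (hasDerivAt_id y)
    exact hd.hasFDerivAt.comp_hasDerivAt y hcurve
  -- a jointly measurable version of the weighted derivative integrand
  set G : ℝ × ℝ → ℝ≥0∞ := fun ξ =>
    ENNReal.ofReal (ξ.2 ^ (2 * m - 2) * (fderiv ℝ v ξ ((0:ℝ), (1:ℝ))) ^ 2) with hGdef
  have hGmeas : Measurable G :=
    ((measurable_snd.pow_const _).mul
      ((measurable_fderiv_apply_const ℝ v ((0:ℝ), (1:ℝ))).pow_const 2)).ennreal_ofReal
  -- Tonelli
  have tonelli : ∀ f : ℝ × ℝ → ℝ≥0∞,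
      AEMeasurable f (volume.restrict (Set.Ioo a b ×ˢ Set.Ioi R)) →
      ∫⁻ ξ in Set.Ioo a b ×ˢ Set.Ioi R, f ξ
        = ∫⁻ x in Set.Ioo a b, ∫⁻ y in Set.Ioi R, f (x, y) := by
    intro f hf
    rw [Measure.volume_eq_prod, ← Measure.prod_restrict] at hf ⊢
    exact lintegral_prod f hf
  have hvmeas : AEMeasurable (fun ξ => ENNReal.ofReal (v ξ ^ 2))
      (volume.restrict (Set.Ioo a b ×ˢ Set.Ioi R)) := by
    have hc : ContinuousOn v (Set.Ioo a b ×ˢ Set.Ioi R) := hv.continuousOn.mono hUsub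
    exact ((hc.pow 2).aemeasurable hS).ennreal_ofReal
  rw [tonelli _ hvmeas]
  have hig : ∀ ξ ∈ Set.Ioo a b ×ˢ Set.Ioi R,
      ENNReal.ofReal (ξ.2 ^ (2 * m - 2) * (deriv (fun t => v (ξ.1, t)) ξ.2) ^ 2) = G ξ := by
    intro ξ hξ
    have h2 : deriv (fun t => v (ξ.1, t)) ξ.2 = fderiv ℝ v ξ ((0:ℝ), (1:ℝ)) :=
      (hslice ξ.1 ξ.2 (hUsub hξ)).deriv
    rw [hGdef, h2]
  rw [setLIntegral_congr_fun hS hig, tonelli G hGmeas.aemeasurable]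
  have hCeq : ((2 * (m:ℝ) - 3)⁻¹ * (2 * (m:ℝ) - 4)⁻¹ * R ^ (-(2:ℝ) * ((m:ℝ) - 2)))
      = ((p - 1)⁻¹ * (p - 2)⁻¹ * R ^ (-(p - 2))) := by
    rw [show -(2:ℝ) * ((m:ℝ) - 2) = -(p - 2) by rw [hpcast]; ring,
      show 2 * (m:ℝ) - 3 = p - 1 by rw [hpcast]; ring,
      show 2 * (m:ℝ) - 4 = p - 2 by rw [hpcast]; ring]
  rw [hCeq, ← lintegral_const_mul' _ _ ENNReal.ofReal_ne_top]
  refine lintegral_mono_ae ?_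
  filter_upwards [ae_restrict_mem measurableSet_Ioo] with x hx
  have hg1 : ∀ t ∈ Set.Ioi R, HasDerivAt (fun t => v (x, t))
      (deriv (fun t => v (x, t)) t) t := by
    intro t ht
    exact (hslice x t ⟨hx, hR.trans ht⟩).differentiableAt.hasDerivAt
  have hone := oneDim_decay p hp4 R hR (fun t => v (x, t)) hg1 (hlim x hx)
  refine hone.trans (le_of_eq ?_)
  congr 1
  refine setLIntegral_congr_fun measurableSet_Ioi (fun y hy => ?_)
  have hd : deriv (fun t => v (x, t)) y = fderiv ℝ v (x, y) ((0:ℝ), (1:ℝ)) :=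
    (hslice x y ⟨hx, hR.trans hy⟩).deriv
  rw [hGdef, hd, hpdef, Real.rpow_natCast]
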